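/- Define Eff = { d ∈ ℤ_{≥0} : -2d + ⌊d/2⌋ + ⌊3d/4⌋ + ⌊4d/5⌋ ≥ 0 }. Then Eff is the submonoid of ℤ_{≥0} generated by 4, 10, 15, and its saturation equals 22. -/
import Mathlib

lemma mem_cl_245 (a b c : ℕ) :
    4 * a + 10 * b + 15 * c ∈ AddSubmonoid.closure ({4, 10, 15} : Set ℕ) := by
  have h4 : (4 : ℕ) ∈ AddSubmonoid.closure ({4, 10, 15} : Set ℕ) :=
    AddSubmonoid.subset_closure (by simp)
  have h10 : (10 : ℕ) ∈ AddSubmonoid.closure ({4, 10, 15} : Set ℕ) :=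
    AddSubmonoid.subset_closure (by simp)
  have h15 : (15 : ℕ) ∈ AddSubmonoid.closure ({4, 10, 15} : Set ℕ) :=
    AddSubmonoid.subset_closure (by simp)
  have := AddSubmonoid.add_mem _ (AddSubmonoid.add_mem _
    (AddSubmonoid.nsmul_mem _ h4 a) (AddSubmonoid.nsmul_mem _ h10 b))
    (AddSubmonoid.nsmul_mem _ h15 c)
  simpa [smul_eq_mul, mul_comm] using this

/-- For signature `(0; 2,4,5; 0)`, the effective monoid
`Eff = {d : -2d + ⌊d/2⌋ + ⌊3d/4⌋ + ⌊4d/5⌋ ≥ 0}` is the submonoid of `ℤ≥0` generated by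
`4, 10, 15`, and its saturation (least `s` with `ℤ≥s ⊆ Eff`) is `22`. -/
theorem eff_monoid_245 :
    ({d : ℕ | 2 * d ≤ d / 2 + 3 * d / 4 + 4 * d / 5} : Set ℕ)
        = (AddSubmonoid.closure ({4, 10, 15} : Set ℕ) : Set ℕ) ∧
      IsLeast {s : ℕ | ∀ n : ℕ, s ≤ n → 2 * n ≤ n / 2 + 3 * n / 4 + 4 * n / 5} 22 := by
  constructor
  · ext d
    simp only [Set.mem_setOf_eq, SetLike.mem_coe]
    constructor
    · intro hd
      rcases lt_or_ge d 22 with h | h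
      · interval_cases d <;> first
          | (exfalso; omega)
          | exact mem_cl_245 0 0 0
          | exact mem_cl_245 1 0 0
          | exact mem_cl_245 2 0 0
          | exact mem_cl_245 0 1 0
          | exact mem_cl_245 3 0 0
          | exact mem_cl_245 1 1 0
          | exact mem_cl_245 0 0 1
          | exact mem_cl_245 4 0 0
          | exact mem_cl_245 2 1 0
          | exact mem_cl_245 1 0 1
          | exact mem_cl_245 5 0 0
      · have : ∃ a b c, d = 4 * a + 10 * b + 15 * c := by
          have hm : d % 4 = 0 ∨ d % 4 = 1 ∨ d % 4 = 2 ∨ d % 4 = 3 := by omega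
          rcases hm with hm | hm | hm | hm
          · exact ⟨d / 4, 0, 0, by omega⟩
          · exact ⟨(d - 25) / 4, 1, 1, by omega⟩
          · exact ⟨(d - 10) / 4, 1, 0, by omega⟩
          · exact ⟨(d - 15) / 4, 0, 1, by omega⟩
        obtain ⟨a, b, c, rfl⟩ := this
        exact mem_cl_245 a b c
    · intro hd
      have : AddSubmonoid.closure ({4, 10, 15} : Set ℕ) ≤
          { carrier := {d : ℕ | 2 * d ≤ d / 2 + 3 * d / 4 + 4 * d / 5},
            zero_mem' := by norm_num,
            add_mem' := by
              intro a b ha hb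
              simp only [Set.mem_setOf_eq] at *
              have h1 : a / 2 + b / 2 ≤ (a + b) / 2 := by omega
              have h2 : 3 * a / 4 + 3 * b / 4 ≤ 3 * (a + b) / 4 := by omega
              have h3 : 4 * a / 5 + 4 * b / 5 ≤ 4 * (a + b) / 5 := by omega
              omega } := by
        apply AddSubmonoid.closure_le.mpr
        intro x hx
        simp only [Set.mem_insert_iff, Set.mem_singleton_iff] at hx
        rcases hx with rfl | rfl | rfl <;>
          · show 2 * _ ≤ _ / 2 + 3 * _ / 4 + 4 * _ / 5
            decide
      exact this hd
  · constructor
    · intro n hn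
      omega
    · intro s hs
      by_contra h
      push_neg at h
      have := hs 21 (by omega)
      omega
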